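/- Let A = (a_n) and B = (b_n) be Waterman sequences such that b_n = o(a_n), i.e. lim_{n→∞} b_n/a_n = 0. If K ⊆ ABV is bounded in the norm ‖·‖_{ABV} and relatively compact with respect to the supremum norm ‖·‖_∞, then K ⊆ BBV and K is relatively compact in the norm ‖·‖_{BBV}. -/

import Mathlib

open Filter Set
open scoped ENNReal

/-- A Waterman sequence: a nonincreasing sequence of positive reals whose series diverges. -/
def IsWaterman (a : ℕ → ℝ) : Prop :=
  Antitone a ∧ (∀ n, 0 < a n) ∧ ¬ Summable a

/-- A Waterman sequence is proper if it moreover tends to zero. -/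
def IsProperWaterman (a : ℕ → ℝ) : Prop :=
  IsWaterman a ∧ Tendsto a atTop (nhds 0)

/-- An admissible sequence of nonoverlapping closed subintervals `[s n, t n]` of `[0,1]`:
the intervals are contained in `[0,1]` and have pairwise disjoint interiors. -/
def Nonoverlapping (s t : ℕ → ℝ) : Prop :=
  (∀ n, 0 ≤ s n ∧ s n ≤ t n ∧ t n ≤ 1) ∧
  Pairwise fun m n => Disjoint (Set.Ioo (s m) (t m)) (Set.Ioo (s n) (t n))

/-- The `A`-variation (in the sense of Waterman) of `x` on `[0,1]`, with values in `[0,∞]`. -/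
noncomputable def eVar (a : ℕ → ℝ) (x : ℝ → ℝ) : ℝ≥0∞ :=
  ⨆ p : {p : (ℕ → ℝ) × (ℕ → ℝ) // Nonoverlapping p.1 p.2},
    ∑' n, ENNReal.ofReal (a n * |x (p.1.2 n) - x (p.1.1 n)|)

/-- Membership in the space `ABV` of functions of bounded `A`-variation. -/
def MemABV (a : ℕ → ℝ) (x : ℝ → ℝ) : Prop := eVar a x < ⊤

/-- The norm `‖x‖_{ABV} = |x(0)| + var_A(x)`, with values in `[0,∞]`. -/
noncomputable def eNormABV (a : ℕ → ℝ) (x : ℝ → ℝ) : ℝ≥0∞ :=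
  ENNReal.ofReal |x 0| + eVar a x

/-- The supremum norm of `x` on `[0,1]`, with values in `[0,∞]`. -/
noncomputable def eSupNorm (x : ℝ → ℝ) : ℝ≥0∞ :=
  ⨆ t ∈ Set.Icc (0 : ℝ) 1, ENNReal.ofReal |x t|

/-- `x` is bounded on `[0,1]`. -/
def BoundedOn01 (x : ℝ → ℝ) : Prop := ∃ C : ℝ, ∀ t ∈ Set.Icc (0 : ℝ) 1, |x t| ≤ C

/-- `K` is relatively compact with respect to the supremum norm on `[0,1]`: every sequence
in `K` has a subsequence converging in the supremum norm to some bounded function. -/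
def RelCompSup (K : Set (ℝ → ℝ)) : Prop :=
  ∀ u : ℕ → ℝ → ℝ, (∀ j, u j ∈ K) →
    ∃ φ : ℕ → ℕ, StrictMono φ ∧ ∃ x : ℝ → ℝ, BoundedOn01 x ∧
      Tendsto (fun k => eSupNorm (u (φ k) - x)) atTop (nhds 0)

/-- `K` is relatively compact in the norm of the space `BBV` (for the sequence `b`):
every sequence in `K` has a subsequence converging in `‖·‖_{BBV}` to an element of `BBV`. -/
def RelCompABV (b : ℕ → ℝ) (K : Set (ℝ → ℝ)) : Prop :=
  ∀ u : ℕ → ℝ → ℝ, (∀ j, u j ∈ K) →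
    ∃ φ : ℕ → ℕ, StrictMono φ ∧ ∃ x : ℝ → ℝ, MemABV b x ∧
      Tendsto (fun k => eNormABV b (u (φ k) - x)) atTop (nhds 0)

/-- `K` is a bounded subset of `ABV`. -/
def BddInABV (a : ℕ → ℝ) (K : Set (ℝ → ℝ)) : Prop :=
  ∃ M : ℝ≥0∞, M < ⊤ ∧ ∀ x ∈ K, eNormABV a x ≤ M

/-- `∑_{k=1}^n b_k = o(∑_{k=1}^n a_k)`. -/
def PartialSumsLittleO (a b : ℕ → ℝ) : Prop :=
  Tendsto (fun n => (∑ k ∈ Finset.range n, b k) / (∑ k ∈ Finset.range n, a k))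
    atTop (nhds 0)

/-- Condition (b): for every `ε > 0` there is `k₀` such that for every nonincreasing
nonnegative sequence `c` tending to `0` with `∑ aₙcₙ < ∞` one has
`∑_{n>k₀} bₙcₙ ≤ ε ∑ₙ aₙcₙ`. -/
def SmallTailCond (a b : ℕ → ℝ) : Prop :=
  ∀ ε : ℝ, 0 < ε → ∃ k₀ : ℕ, ∀ c : ℕ → ℝ,
    (∀ n, 0 ≤ c n) → Antitone c → Tendsto c atTop (nhds 0) →
    (∑' n, ENNReal.ofReal (a n * c n)) < ⊤ →
    (∑' n, ENNReal.ofReal (b (n + k₀) * c (n + k₀))) ≤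
      ENNReal.ofReal ε * ∑' n, ENNReal.ofReal (a n * c n)

/-- The compact-embedding property from `ABV` into `BBV`: every bounded subset of `ABV`
which is relatively compact in the supremum norm is contained in `BBV` and relatively
compact there. -/
def CompactEmbeddingABV (a b : ℕ → ℝ) : Prop :=
  ∀ K : Set (ℝ → ℝ), (∀ x ∈ K, MemABV a x) → BddInABV a K → RelCompSup K →
    (∀ x ∈ K, MemABV b x) ∧ RelCompABV b K

/-- The summable ideal `I_A = {C ⊆ ℕ : ∑_{n ∈ C} a_n < ∞}` (as a family of sets;
it may equal `P(ℕ)` when `∑ a_n < ∞`). -/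
def IdealOf (a : ℕ → ℝ) : Set (Set ℕ) := {C : Set ℕ | Summable fun n : C => a n}

/-- The Katětov order on families of subsets of `ℕ`. -/
def KatetovLE (I J : Set (Set ℕ)) : Prop :=
  ∃ f : ℕ → ℕ, ∀ C ∈ I, f ⁻¹' C ∈ J

/-- Given a sequence `b` and an increasing sequence `m` of naturals, the sequence `b^M`,
whose `n`-th term is `k·bₙ` where `k` is the number of indices `j` with `m j ≤ n`
(and `bₙ` itself if `n` is below all of `m`). -/
def seqM (b : ℕ → ℝ) (m : ℕ → ℕ) (n : ℕ) : ℝ :=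
  ((max 1 (((Finset.range (n + 1)).filter fun j => m j ≤ n).card) : ℕ) : ℝ) * b n

/-- An admissible `n`-tuple of nonoverlapping closed subintervals of `[0,1]`. -/
def NonoverlappingFin {n : ℕ} (s t : Fin n → ℝ) : Prop :=
  (∀ i, 0 ≤ s i ∧ s i ≤ t i ∧ t i ≤ 1) ∧
  Pairwise fun i j => Disjoint (Set.Ioo (s i) (t i)) (Set.Ioo (s j) (t j))

/-- The modulus of variation of Chanturia: `v(x,n)` is the supremum of `∑_{k=1}^n |x(I_k)|`
over all `n`-tuples of nonoverlapping closed subintervals of `[0,1]`. -/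
noncomputable def modVar (x : ℝ → ℝ) (n : ℕ) : ℝ≥0∞ :=
  ⨆ p : {p : (Fin n → ℝ) × (Fin n → ℝ) // NonoverlappingFin p.1 p.2},
    ENNReal.ofReal (∑ i, |x (p.1.2 i) - x (p.1.1 i)|)

/-- Membership in the Chanturia class `V[g(n)]`: `x` is bounded and `v(x,n) = O(g(n))`. -/
def MemChanturia (g : ℕ → ℝ) (x : ℝ → ℝ) : Prop :=
  BoundedOn01 x ∧ ∃ η : ℝ, 0 < η ∧ ∀ n, modVar x n ≤ ENNReal.ofReal (η * g n)

/-- The norm `‖x‖_{φ_g} = |x(0)| + sup_n v(x,n)/g(n)` of the Chanturia class. -/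
noncomputable def eNormChan (g : ℕ → ℝ) (x : ℝ → ℝ) : ℝ≥0∞ :=
  ENNReal.ofReal |x 0| + ⨆ n, modVar x n / ENNReal.ofReal (g n)

/-- The family `𝒢`: positive, nondecreasing `g` tending to `∞` with `n/g(n)`
nondecreasing and tending to `∞`. -/
def MemG (g : ℕ → ℝ) : Prop :=
  (∀ n, 0 < g n) ∧ Monotone g ∧ Tendsto g atTop atTop ∧
  Monotone (fun n : ℕ => (n : ℝ) / g n) ∧ Tendsto (fun n : ℕ => (n : ℝ) / g n) atTop atTop

/-- `K` is a bounded subset of the Chanturia class `V[g(n)]`. -/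
def BddInChan (g : ℕ → ℝ) (K : Set (ℝ → ℝ)) : Prop :=
  ∃ M : ℝ≥0∞, M < ⊤ ∧ ∀ x ∈ K, eNormChan g x ≤ M

/-- `K` is relatively compact in the norm of the Chanturia class `V[h(n)]`. -/
def RelCompChan (h : ℕ → ℝ) (K : Set (ℝ → ℝ)) : Prop :=
  ∀ u : ℕ → ℝ → ℝ, (∀ j, u j ∈ K) →
    ∃ φ : ℕ → ℕ, StrictMono φ ∧ ∃ x : ℝ → ℝ, MemChanturia h x ∧
      Tendsto (fun k => eNormChan h (u (φ k) - x)) atTop (nhds 0)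

/-- The compact-embedding property from `V[g(n)]` into `V[h(n)]`. -/
def CompactEmbeddingChan (g h : ℕ → ℝ) : Prop :=
  ∀ K : Set (ℝ → ℝ), (∀ x ∈ K, MemChanturia g x) → BddInChan g K → RelCompSup K →
    (∀ x ∈ K, MemChanturia h x) ∧ RelCompChan h K

/-- The submeasure `φ_g(C) = sup_n |C ∩ {0,…,n}| / g(n)`, with values in `[0,∞]`. -/
noncomputable def phiSub (g : ℕ → ℝ) (C : Set ℕ) : ℝ≥0∞ :=
  ⨆ n, ENNReal.ofReal (((C ∩ Set.Iic n).ncard : ℝ) / g n)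

/-- The exhaustive ideal `Exh(φ_g)`. -/
def Exh (g : ℕ → ℝ) : Set (Set ℕ) :=
  {C : Set ℕ | Tendsto (fun k => phiSub g (C \ Set.Iic k)) atTop (nhds 0)}

/-- The characteristic function of `[0,t]`. -/
noncomputable def chi (t : ℝ) : ℝ → ℝ := Set.indicator (Set.Icc 0 t) fun _ => 1

lemma ofReal_abs_le_eSupNorm (y : ℝ → ℝ) {t : ℝ} (ht : t ∈ Set.Icc (0:ℝ) 1) :
    ENNReal.ofReal |y t| ≤ eSupNorm y := by
  unfold eSupNorm
  exact le_biSup (fun t => ENNReal.ofReal |y t|) ht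

lemma le_eVar (a : ℕ → ℝ) (x : ℝ → ℝ) (p : {p : (ℕ → ℝ) × (ℕ → ℝ) // Nonoverlapping p.1 p.2}) :
    ∑' n, ENNReal.ofReal (a n * |x (p.1.2 n) - x (p.1.1 n)|) ≤ eVar a x := by
  unfold eVar
  exact le_iSup (fun p : {p : (ℕ → ℝ) × (ℕ → ℝ) // Nonoverlapping p.1 p.2} =>
    ∑' n, ENNReal.ofReal (a n * |x (p.1.2 n) - x (p.1.1 n)|)) p

lemma eVar_le {a : ℕ → ℝ} {x : ℝ → ℝ} {c : ℝ≥0∞}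
    (h : ∀ p : {p : (ℕ → ℝ) × (ℕ → ℝ) // Nonoverlapping p.1 p.2},
      ∑' n, ENNReal.ofReal (a n * |x (p.1.2 n) - x (p.1.1 n)|) ≤ c) : eVar a x ≤ c := by
  unfold eVar; exact iSup_le h

lemma eVar_le_mul {b a : ℕ → ℝ} {C : ℝ} (hC : 0 ≤ C) (h : ∀ n, b n ≤ C * a n)
    (x : ℝ → ℝ) : eVar b x ≤ ENNReal.ofReal C * eVar a x := by
  refine eVar_le fun p => ?_
  calc ∑' n, ENNReal.ofReal (b n * |x (p.1.2 n) - x (p.1.1 n)|)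
      ≤ ∑' n, ENNReal.ofReal C * ENNReal.ofReal (a n * |x (p.1.2 n) - x (p.1.1 n)|) := by
        refine ENNReal.tsum_le_tsum fun n => ?_
        rw [← ENNReal.ofReal_mul hC, ← mul_assoc]
        exact ENNReal.ofReal_le_ofReal (mul_le_mul_of_nonneg_right (h n) (abs_nonneg _))
    _ = ENNReal.ofReal C * ∑' n, ENNReal.ofReal (a n * |x (p.1.2 n) - x (p.1.1 n)|) :=
        ENNReal.tsum_mul_left
    _ ≤ ENNReal.ofReal C * eVar a x := mul_le_mul_right (le_eVar _ _ p) _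

lemma eVar_sub_le {a : ℕ → ℝ} (ha : ∀ n, 0 ≤ a n) (y z : ℝ → ℝ) :
    eVar a (y - z) ≤ eVar a y + eVar a z := by
  refine eVar_le fun p => ?_
  calc ∑' n, ENNReal.ofReal (a n * |(y - z) (p.1.2 n) - (y - z) (p.1.1 n)|)
      ≤ ∑' n, (ENNReal.ofReal (a n * |y (p.1.2 n) - y (p.1.1 n)|)
            + ENNReal.ofReal (a n * |z (p.1.2 n) - z (p.1.1 n)|)) := by
        refine ENNReal.tsum_le_tsum fun n => ?_
        rw [← ENNReal.ofReal_add (mul_nonneg (ha n) (abs_nonneg _)) (mul_nonneg (ha n) (abs_nonneg _))]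
        refine ENNReal.ofReal_le_ofReal ?_
        rw [← mul_add]
        refine mul_le_mul_of_nonneg_left ?_ (ha n)
        simp only [Pi.sub_apply]
        have e : y (p.1.2 n) - z (p.1.2 n) - (y (p.1.1 n) - z (p.1.1 n))
            = (y (p.1.2 n) - y (p.1.1 n)) - (z (p.1.2 n) - z (p.1.1 n)) := by ring
        rw [e]; exact abs_sub _ _
    _ = _ + _ := ENNReal.tsum_add
    _ ≤ eVar a y + eVar a z := add_le_add (le_eVar _ _ p) (le_eVar _ _ p)

lemma eVar_le_of_unif {a : ℕ → ℝ} {u : ℕ → ℝ → ℝ} {x : ℝ → ℝ} {M : ℝ≥0∞}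
    (hconv : Tendsto (fun k => eSupNorm (u k - x)) atTop (nhds 0))
    (hM : ∀ k, eVar a (u k) ≤ M) : eVar a x ≤ M := by
  have hpt : ∀ t ∈ Set.Icc (0:ℝ) 1, Tendsto (fun k => u k t) atTop (nhds (x t)) := by
    intro t ht
    have h1 : Tendsto (fun k => ENNReal.ofReal |(u k - x) t|) atTop (nhds 0) :=
      tendsto_of_tendsto_of_tendsto_of_le_of_le tendsto_const_nhds hconv
        (fun k => bot_le) (fun k => ofReal_abs_le_eSupNorm _ ht)
    have h2 : Tendsto (fun k => |(u k - x) t|) atTop (nhds 0) := by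
      have h3 := (ENNReal.tendsto_toReal (a := 0) (by simp)).comp h1
      simpa [Function.comp_def, ENNReal.toReal_ofReal (abs_nonneg _)] using h3
    have h4 : Tendsto (fun k => u k t - x t) atTop (nhds 0) := by
      rw [tendsto_zero_iff_abs_tendsto_zero]
      simpa [Function.comp_def] using h2
    simpa using h4.add (tendsto_const_nhds (x := x t))
  refine eVar_le fun p => ?_
  rw [ENNReal.tsum_eq_iSup_sum]
  refine iSup_le fun s => ?_
  have hmem : ∀ n, p.1.1 n ∈ Set.Icc (0:ℝ) 1 ∧ p.1.2 n ∈ Set.Icc (0:ℝ) 1 := by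
    intro n
    obtain ⟨h1, h2, h3⟩ := p.2.1 n
    exact ⟨⟨h1, h2.trans h3⟩, ⟨h1.trans h2, h3⟩⟩
  have hT : Tendsto (fun k => ∑ n ∈ s, ENNReal.ofReal (a n * |u k (p.1.2 n) - u k (p.1.1 n)|))
      atTop (nhds (∑ n ∈ s, ENNReal.ofReal (a n * |x (p.1.2 n) - x (p.1.1 n)|))) := by
    refine tendsto_finset_sum _ fun n _ => ?_
    have hr : Tendsto (fun k => a n * |u k (p.1.2 n) - u k (p.1.1 n)|) atTop
        (nhds (a n * |x (p.1.2 n) - x (p.1.1 n)|)) :=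
      (((hpt _ (hmem n).2).sub (hpt _ (hmem n).1)).abs).const_mul _
    exact (ENNReal.continuous_ofReal.tendsto _).comp hr
  refine le_of_tendsto hT (Eventually.of_forall fun k => ?_)
  calc ∑ n ∈ s, ENNReal.ofReal (a n * |u k (p.1.2 n) - u k (p.1.1 n)|)
      ≤ ∑' n, ENNReal.ofReal (a n * |u k (p.1.2 n) - u k (p.1.1 n)|) := ENNReal.sum_le_tsum s
    _ ≤ eVar a (u k) := le_eVar _ _ p
    _ ≤ M := hM k

lemma eVar_split {a b : ℕ → ℝ} (hb : ∀ n, 0 ≤ b n) {ε : ℝ} (hε : 0 ≤ ε) (N : ℕ)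
    (hN : ∀ n, N ≤ n → b n ≤ ε * a n) (y : ℝ → ℝ) :
    eVar b y ≤ (∑ n ∈ Finset.range N, ENNReal.ofReal (b n)) * (2 * eSupNorm y)
      + ENNReal.ofReal ε * eVar a y := by
  refine eVar_le fun p => ?_
  have hmem : ∀ n, p.1.1 n ∈ Set.Icc (0:ℝ) 1 ∧ p.1.2 n ∈ Set.Icc (0:ℝ) 1 := by
    intro n
    obtain ⟨h1, h2, h3⟩ := p.2.1 n
    exact ⟨⟨h1, h2.trans h3⟩, ⟨h1.trans h2, h3⟩⟩
  have hterm : ∀ n, ENNReal.ofReal (b n * |y (p.1.2 n) - y (p.1.1 n)|)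
      ≤ (if n < N then ENNReal.ofReal (b n) * (2 * eSupNorm y) else 0)
        + ENNReal.ofReal ε * ENNReal.ofReal (a n * |y (p.1.2 n) - y (p.1.1 n)|) := by
    intro n
    rcases lt_or_ge n N with h | h
    · rw [if_pos h]
      refine le_add_right ?_
      rw [ENNReal.ofReal_mul (hb n)]
      refine mul_le_mul_right ?_ _
      calc ENNReal.ofReal |y (p.1.2 n) - y (p.1.1 n)|
          ≤ ENNReal.ofReal (|y (p.1.2 n)| + |y (p.1.1 n)|) :=
            ENNReal.ofReal_le_ofReal (abs_sub _ _)
        _ = ENNReal.ofReal |y (p.1.2 n)| + ENNReal.ofReal |y (p.1.1 n)| :=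
            ENNReal.ofReal_add (abs_nonneg _) (abs_nonneg _)
        _ ≤ eSupNorm y + eSupNorm y :=
            add_le_add (ofReal_abs_le_eSupNorm _ (hmem n).2) (ofReal_abs_le_eSupNorm _ (hmem n).1)
        _ = 2 * eSupNorm y := (two_mul _).symm
    · rw [if_neg (by omega)]
      rw [zero_add, ← ENNReal.ofReal_mul hε, ← mul_assoc]
      exact ENNReal.ofReal_le_ofReal (mul_le_mul_of_nonneg_right (hN n h) (abs_nonneg _))
  calc ∑' n, ENNReal.ofReal (b n * |y (p.1.2 n) - y (p.1.1 n)|)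
      ≤ ∑' n, ((if n < N then ENNReal.ofReal (b n) * (2 * eSupNorm y) else 0)
        + ENNReal.ofReal ε * ENNReal.ofReal (a n * |y (p.1.2 n) - y (p.1.1 n)|)) :=
        ENNReal.tsum_le_tsum hterm
    _ = (∑' n, (if n < N then ENNReal.ofReal (b n) * (2 * eSupNorm y) else 0))
        + ∑' n, ENNReal.ofReal ε * ENNReal.ofReal (a n * |y (p.1.2 n) - y (p.1.1 n)|) :=
        ENNReal.tsum_add
    _ ≤ (∑ n ∈ Finset.range N, ENNReal.ofReal (b n) * (2 * eSupNorm y))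
        + ENNReal.ofReal ε * eVar a y := by
        refine add_le_add (le_of_eq ?_) ?_
        · rw [tsum_eq_sum (s := Finset.range N)]
          · exact Finset.sum_congr rfl fun n hn => if_pos (Finset.mem_range.mp hn)
          · intro n hn; exact if_neg (by simpa using hn)
        · rw [ENNReal.tsum_mul_left]
          exact mul_le_mul_right (le_eVar _ _ p) _
    _ = (∑ n ∈ Finset.range N, ENNReal.ofReal (b n)) * (2 * eSupNorm y)
        + ENNReal.ofReal ε * eVar a y := by rw [Finset.sum_mul]

theorem stmt0 (a b : ℕ → ℝ) (hA : IsWaterman a) (hB : IsWaterman b)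
    (hsmall : Tendsto (fun n => b n / a n) atTop (nhds 0))
    (K : Set (ℝ → ℝ)) (hKmem : ∀ x ∈ K, MemABV a x)
    (hKbdd : BddInABV a K) (hKcomp : RelCompSup K) :
    (∀ x ∈ K, MemABV b x) ∧ RelCompABV b K := by
  obtain ⟨-, hapos, -⟩ := hA
  obtain ⟨-, hbpos, -⟩ := hB
  obtain ⟨M, hMlt, hMK⟩ := hKbdd
  have hdivle : ∀ (n : ℕ) (C : ℝ), b n / a n ≤ C → b n ≤ C * a n := fun n C h => by
    calc b n = (b n / a n) * a n := (div_mul_cancel₀ _ (hapos n).ne').symm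
      _ ≤ C * a n := mul_le_mul_of_nonneg_right h (hapos n).le
  obtain ⟨N1, hN1⟩ := eventually_atTop.mp (hsmall.eventually (gt_mem_nhds one_pos))
  set C := 1 + ∑ n ∈ Finset.range N1, b n / a n with hCdef
  have hsum0 : 0 ≤ ∑ n ∈ Finset.range N1, b n / a n :=
    Finset.sum_nonneg fun n _ => div_nonneg (hbpos n).le (hapos n).le
  have hC0 : 0 ≤ C := by rw [hCdef]; linarith
  have hCle : ∀ n, b n ≤ C * a n := by
    intro n
    refine hdivle n C ?_
    rcases lt_or_ge n N1 with h | h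
    · have := Finset.single_le_sum (f := fun i => b i / a i)
        (fun i _ => div_nonneg (hbpos i).le (hapos i).le) (Finset.mem_range.mpr h)
      rw [hCdef]; linarith
    · have := (hN1 n h).le
      rw [hCdef]; linarith
  have memB : ∀ x : ℝ → ℝ, eVar a x < ⊤ → MemABV b x := fun x hx =>
    lt_of_le_of_lt (eVar_le_mul hC0 hCle x) (ENNReal.mul_lt_top ENNReal.ofReal_lt_top hx)
  have evar_le_norm : ∀ x : ℝ → ℝ, eVar a x ≤ eNormABV a x := fun x => by
    unfold eNormABV; exact le_add_self
  refine ⟨fun x hx => memB x (hKmem x hx), ?_⟩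
  intro u hu
  obtain ⟨φ, hφ, x, hxbdd, hconv⟩ := hKcomp u hu
  have hvar_u : ∀ j, eVar a (u j) ≤ M := fun j => (evar_le_norm _).trans (hMK _ (hu j))
  have hxA : eVar a x ≤ M := eVar_le_of_unif hconv fun k => hvar_u (φ k)
  refine ⟨φ, hφ, x, memB x (hxA.trans_lt hMlt), ?_⟩
  have hvary : ∀ k, eVar a (u (φ k) - x) ≤ M + M := fun k =>
    (eVar_sub_le (fun n => (hapos n).le) _ _).trans (add_le_add (hvar_u _) hxA)
  rw [ENNReal.tendsto_atTop_zero]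
  intro ε' hε'
  rcases eq_top_or_lt_top ε' with rfl | hεtop
  · exact ⟨0, fun k _ => le_top⟩
  have h3 : (0:ℝ≥0∞) < ε' / 3 := ENNReal.div_pos hε'.ne' (by norm_num)
  have h3top : ε' / 3 ≠ ⊤ := (ENNReal.div_lt_top hεtop.ne (by norm_num)).ne
  set D : ℝ≥0∞ := M + M + 1 with hDdef
  have hD0 : D ≠ 0 := (lt_of_lt_of_le one_pos le_add_self).ne'
  have hDtop : D ≠ ⊤ :=
    ENNReal.add_ne_top.mpr ⟨ENNReal.add_ne_top.mpr ⟨hMlt.ne, hMlt.ne⟩, ENNReal.one_ne_top⟩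
  set δ := ε' / 3 / D with hδdef
  have hδ0 : 0 < δ := ENNReal.div_pos h3.ne' hDtop
  have hδtop : δ ≠ ⊤ := (ENNReal.div_lt_top h3top hD0).ne
  set εr := δ.toReal with hεrdef
  have hεr : 0 < εr := ENNReal.toReal_pos hδ0.ne' hδtop
  have hofδ : ENNReal.ofReal εr = δ := ENNReal.ofReal_toReal hδtop
  obtain ⟨N, hNε⟩ := eventually_atTop.mp (hsmall.eventually (gt_mem_nhds hεr))
  have hble : ∀ n, N ≤ n → b n ≤ εr * a n := fun n hn => hdivle n εr (hNε n hn).le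
  set B : ℝ≥0∞ := ∑ n ∈ Finset.range N, ENNReal.ofReal (b n) with hBdef
  have hBtop : B ≠ ⊤ := (ENNReal.sum_lt_top.mpr fun n _ => ENNReal.ofReal_lt_top).ne
  set E : ℝ≥0∞ := 1 + 2 * B with hEdef
  have hE0 : E ≠ 0 := (lt_of_lt_of_le one_pos le_self_add).ne'
  have hEtop : E ≠ ⊤ :=
    ENNReal.add_ne_top.mpr ⟨ENNReal.one_ne_top, ENNReal.mul_ne_top (by norm_num) hBtop⟩
  set σ := ε' / 3 / E with hσdef
  have hσ0 : 0 < σ := ENNReal.div_pos h3.ne' hEtop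
  obtain ⟨k0, hk0⟩ := (ENNReal.tendsto_atTop_zero.mp hconv) σ hσ0
  refine ⟨k0, fun k hk => ?_⟩
  set S := eSupNorm (u (φ k) - x) with hSdef
  have h0mem : (0:ℝ) ∈ Set.Icc (0:ℝ) 1 := ⟨le_refl _, zero_le_one⟩
  calc eNormABV b (u (φ k) - x)
      = ENNReal.ofReal |(u (φ k) - x) 0| + eVar b (u (φ k) - x) := rfl
    _ ≤ S + (B * (2 * S) + ENNReal.ofReal εr * eVar a (u (φ k) - x)) :=
        add_le_add (ofReal_abs_le_eSupNorm _ h0mem)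
          (eVar_split (fun n => (hbpos n).le) hεr.le N hble _)
    _ ≤ S + (B * (2 * S) + δ * D) := by
        refine add_le_add_right (add_le_add_right ?_ _) _
        rw [hofδ]
        exact mul_le_mul_right ((hvary k).trans le_self_add) δ
    _ = E * S + δ * D := by rw [hEdef]; ring
    _ ≤ E * σ + δ * D := add_le_add_left (mul_le_mul_right (hk0 k hk) E) _
    _ = ε' / 3 + ε' / 3 := by
        rw [hσdef, hδdef, mul_comm E, ENNReal.div_mul_cancel hE0 hEtop,
          ENNReal.div_mul_cancel hD0 hDtop]
    _ ≤ ε' := by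
        calc ε' / 3 + ε' / 3 ≤ ε' / 3 + ε' / 3 + ε' / 3 := le_self_add
          _ = ε' := ENNReal.add_thirds ε'
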